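/- Let A be a Φ-local Φ-ring and M an A-module. Then M is flat over A if and only if the A^◁-module M ⊗_A A^◁ is flat and the canonical map M → M ⊗_A A^◁ is injective. -/

import Mathlib

/-- A ring with constructible supports (a `Φ`-ring): a commutative ring together with a
family of finitely generated ideals (the *admissible* ideals) containing the unit ideal,
stable under products, and such that any finitely generated ideal containing an admissible
ideal is admissible. -/
structure PhiRing (A : Type*) [CommRing A] where
  adm : Set (Ideal A)
  fg_of_mem : ∀ I ∈ adm, I.FG
  top_mem : ⊤ ∈ adm
  mul_mem : ∀ I ∈ adm, ∀ J ∈ adm, I * J ∈ adm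
  enlarge_mem : ∀ I ∈ adm, ∀ J : Ideal A, J.FG → I ≤ J → J ∈ adm

/-- The multiplicative set of elements of `A` generating an admissible ideal. -/
def PhiRing.S {A : Type*} [CommRing A] (Φ : PhiRing A) : Submonoid A where
  carrier := {a : A | Ideal.span {a} ∈ Φ.adm}
  one_mem' := by
    show Ideal.span {(1 : A)} ∈ Φ.adm
    rw [Ideal.span_singleton_one]
    exact Φ.top_mem
  mul_mem' := by
    intro a b ha hb
    show Ideal.span {a * b} ∈ Φ.adm
    rw [← Ideal.span_singleton_mul_span_singleton]
    exact Φ.mul_mem _ ha _ hb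

/-- `A` is `Φ`-local if (it is local and) every admissible ideal is invertible;
in a local ring, an ideal is invertible iff it is generated by a single nonzerodivisor. -/
def PhiRing.IsPhiLocal {A : Type*} [CommRing A] (Φ : PhiRing A) : Prop :=
  ∀ I ∈ Φ.adm, ∃ a ∈ nonZeroDivisors A, I = Ideal.span {a}

open TensorProduct LinearMap Function

namespace PhiRingProof

variable {A : Type*} [CommRing A]

lemma mem_S_iff (Φ : PhiRing A) {a : A} : a ∈ Φ.S ↔ Ideal.span {a} ∈ Φ.adm := Iff.rfl

/-- Any element of a tensor product is a finite (`Fin`-indexed) sum of pure tensors. -/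
lemma fin_rep {P N : Type*} [AddCommGroup P] [Module A P] [AddCommGroup N] [Module A N]
    (w : P ⊗[A] N) : ∃ (c : ℕ) (p : Fin c → P) (q : Fin c → N), w = ∑ j, p j ⊗ₜ[A] q j := by
  have h : ∃ l : List (P × N), w = (l.map fun x => x.1 ⊗ₜ[A] x.2).sum := by
    induction w with
    | zero => exact ⟨[], rfl⟩
    | tmul p n => exact ⟨[(p, n)], by simp⟩
    | add x y hx hy =>
      obtain ⟨l1, rfl⟩ := hx
      obtain ⟨l2, rfl⟩ := hy
      exact ⟨l1 ++ l2, by simp⟩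
  obtain ⟨l, hl⟩ := h
  refine ⟨l.length, fun j => (l.get j).1, fun j => (l.get j).2, ?_⟩
  rw [hl]
  conv_lhs => rw [← List.ofFn_get l]
  rw [List.map_ofFn, List.sum_ofFn]
  rfl

variable [IsLocalRing A] {Φ : PhiRing A}

lemma exists_gen (hΦ : Φ.IsPhiLocal) {D : Ideal A} (hD : D.FG) {s : A} (hs : s ∈ Φ.S)
    (hsD : s ∈ D) : ∃ d, d ∈ Φ.S ∧ d ∈ nonZeroDivisors A ∧ D = Ideal.span {d} := by
  have hadm : D ∈ Φ.adm :=
    Φ.enlarge_mem _ ((mem_S_iff Φ).1 hs) D hD (by rwa [Ideal.span_singleton_le_iff_mem])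
  obtain ⟨d, hdnz, hDd⟩ := hΦ D hadm
  exact ⟨d, (mem_S_iff Φ).2 (hDd ▸ hadm), hdnz, hDd⟩

lemma nzd_of_mem_S (hΦ : Φ.IsPhiLocal) {s : A} (hs : s ∈ Φ.S) : s ∈ nonZeroDivisors A := by
  obtain ⟨d, hdS, hdnz, hDd⟩ := exists_gen hΦ ⟨{s}, by simp⟩ hs (Ideal.mem_span_singleton_self s)
  obtain ⟨c, hc⟩ := Ideal.mem_span_singleton'.1 (hDd ▸ Ideal.mem_span_singleton_self s)
  obtain ⟨e, he⟩ := Ideal.mem_span_singleton'.1 (hDd.symm ▸ Ideal.mem_span_singleton_self d)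
  have h1 : (e * c) * d = 1 * d := by
    rw [one_mul]
    calc (e * c) * d = e * (c * d) := by ring
      _ = e * s := by rw [hc]
      _ = d := he
  have hec : e * c = 1 := (mul_cancel_right_mem_nonZeroDivisors hdnz).1 h1
  rw [mem_nonZeroDivisors_iff_right]
  intro z hz
  have hzc : (z * c) * d = 0 * d := by
    rw [zero_mul]
    calc (z * c) * d = z * (c * d) := by ring
      _ = z * s := by rw [hc]
      _ = 0 := hz
  have hz0 : z * c = 0 := (mul_cancel_right_mem_nonZeroDivisors hdnz).1 hzc
  calc z = z * (e * c) := by rw [hec, mul_one]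
    _ = (z * c) * e := by ring
    _ = 0 := by rw [hz0, zero_mul]

lemma dichotomy (hΦ : Φ.IsPhiLocal) {s : A} (hs : s ∈ Φ.S) (a : A) :
    a ∈ Φ.S ∨ ∃ b, a = s * b := by
  classical
  have hfg : (Ideal.span ({a, s} : Set A)).FG := ⟨({a, s} : Finset A), by simp⟩
  have hsD : s ∈ Ideal.span ({a, s} : Set A) := Ideal.subset_span (by simp)
  have haD : a ∈ Ideal.span ({a, s} : Set A) := Ideal.subset_span (by simp)
  obtain ⟨d, hdS, hdnz, hDd⟩ := exists_gen hΦ hfg hs hsD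
  obtain ⟨c, hc⟩ := Ideal.mem_span_singleton'.1 (hDd ▸ haD)
  obtain ⟨f, hf⟩ := Ideal.mem_span_singleton'.1 (hDd ▸ hsD)
  obtain ⟨x, y, hxy⟩ := Ideal.mem_span_pair.1 (hDd.symm ▸ Ideal.mem_span_singleton_self d)
  have h1 : (x * c + y * f) * d = 1 * d := by
    linear_combination hxy + x * hc + y * hf
  have h2 : x * c + y * f = 1 := (mul_cancel_right_mem_nonZeroDivisors hdnz).1 h1
  rcases IsLocalRing.isUnit_or_isUnit_of_isUnit_add (h2 ▸ isUnit_one) with hu | hu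
  · left
    have hcu : IsUnit c := isUnit_of_mul_isUnit_right hu
    obtain ⟨g, hg⟩ := hcu.exists_right_inv
    rw [mem_S_iff]
    have hspan : Ideal.span {a} = Ideal.span {d} := by
      apply le_antisymm
      · rw [Ideal.span_singleton_le_iff_mem]
        exact Ideal.mem_span_singleton'.2 ⟨c, hc⟩
      · rw [Ideal.span_singleton_le_iff_mem]
        refine Ideal.mem_span_singleton'.2 ⟨g, ?_⟩
        calc g * a = g * (c * d) := by rw [hc]
          _ = (c * g) * d := by ring
          _ = d := by rw [hg, one_mul]
    rw [hspan, ← hDd]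
    exact Φ.enlarge_mem _ ((mem_S_iff Φ).1 hs) _ hfg
      (by rwa [Ideal.span_singleton_le_iff_mem])
  · right
    have hfu : IsUnit f := isUnit_of_mul_isUnit_right hu
    obtain ⟨g, hg⟩ := hfu.exists_right_inv
    refine ⟨c * g, ?_⟩
    calc a = c * d := hc.symm
      _ = c * ((f * g) * d) := by rw [hg, one_mul]
      _ = (f * d) * (c * g) := by ring
      _ = s * (c * g) := by rw [hf]

variable {M : Type*} [AddCommGroup M] [Module A M]

lemma reg_of_S (hinj : Injective (LocalizedModule.mkLinearMap Φ.S M)) {s : A} (hs : s ∈ Φ.S) :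
    IsSMulRegular M s := by
  intro m1 m2 h
  apply hinj
  have h2 : (algebraMap A (Localization Φ.S)) s • (LocalizedModule.mkLinearMap Φ.S M m1)
      = (algebraMap A (Localization Φ.S)) s • (LocalizedModule.mkLinearMap Φ.S M m2) := by
    rw [algebraMap_smul, algebraMap_smul, ← map_smul, ← map_smul]
    exact congrArg _ h
  exact ((IsLocalization.map_units (Localization Φ.S) ⟨s, hs⟩).smul_left_cancel).1 h2

lemma flat_reg [Module.Flat A M] {s : A} (hs : s ∈ nonZeroDivisors A) : IsSMulRegular M s := by
  have hg : Injective (LinearMap.toSpanSingleton A A s) := by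
    intro c1 c2 h
    simp only [LinearMap.toSpanSingleton_apply, smul_eq_mul] at h
    exact (mul_cancel_right_mem_nonZeroDivisors hs).1 h
  have hT := Module.Flat.rTensor_preserves_injective_linearMap (M := M) _ hg
  intro m1 m2 h
  have h' : s • m1 = s • m2 := h
  have h1 : rTensor M (LinearMap.toSpanSingleton A A s) ((1 : A) ⊗ₜ[A] m1)
      = rTensor M (LinearMap.toSpanSingleton A A s) ((1 : A) ⊗ₜ[A] m2) := by
    rw [rTensor_tmul, rTensor_tmul, LinearMap.toSpanSingleton_apply, one_smul]
    calc s ⊗ₜ[A] m1 = (s • (1 : A)) ⊗ₜ[A] m1 := by rw [smul_eq_mul, mul_one]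
      _ = (1 : A) ⊗ₜ[A] (s • m1) := smul_tmul _ _ _
      _ = (1 : A) ⊗ₜ[A] (s • m2) := by rw [h']
      _ = (s • (1 : A)) ⊗ₜ[A] m2 := (smul_tmul _ _ _).symm
      _ = s ⊗ₜ[A] m2 := by rw [smul_eq_mul, mul_one]
  have h2 := hT h1
  have h3 := congrArg (TensorProduct.lid A M) h2
  simpa using h3

lemma principal_inj {d : A} (hdnz : d ∈ nonZeroDivisors A) (hreg : IsSMulRegular M d) :
    Injective (rTensor M (Submodule.subtype (Ideal.span {d} : Ideal A))) := by
  set I : Ideal A := Ideal.span {d} with hI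
  have hdI : d ∈ I := Ideal.mem_span_singleton_self d
  set f : A →ₗ[A] I := LinearMap.toSpanSingleton A I ⟨d, hdI⟩ with hf
  have hfs : Surjective f := by
    rintro ⟨y, hy⟩
    obtain ⟨c, hc⟩ := Ideal.mem_span_singleton'.1 hy
    refine ⟨c, Subtype.ext ?_⟩
    show (c • (⟨d, hdI⟩ : I) : I).1 = y
    rw [Submodule.coe_smul, smul_eq_mul]
    exact hc
  have hkey : ∀ z : A ⊗[A] M, rTensor M (Submodule.subtype I ∘ₗ f) z = d • z := by
    intro z
    induction z with
    | zero => simp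
    | tmul x m =>
      have hx : (Submodule.subtype I ∘ₗ f) x = x * d := by
        simp [hf, LinearMap.toSpanSingleton_apply, smul_eq_mul]
      rw [rTensor_tmul, hx, TensorProduct.smul_tmul', smul_eq_mul, mul_comm]
    | add u v hu hv => rw [map_add, smul_add, hu, hv]
  have hreg' : ∀ z1 z2 : A ⊗[A] M, d • z1 = d • z2 → z1 = z2 := by
    intro z1 z2 h
    have h' := congrArg (TensorProduct.lid A M) h
    rw [map_smul, map_smul] at h'
    exact (TensorProduct.lid A M).injective (hreg h')
  intro z1 z2 h
  obtain ⟨t1, rfl⟩ := rTensor_surjective M (g := f) hfs z1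
  obtain ⟨t2, rfl⟩ := rTensor_surjective M (g := f) hfs z2
  have e1 : d • t1 = d • t2 := by
    rw [← hkey t1, ← hkey t2, rTensor_comp, LinearMap.comp_apply, LinearMap.comp_apply]
    exact h
  exact congrArg (fun t => rTensor M f t) (hreg' _ _ e1)

lemma step_inj (hΦ : Φ.IsPhiLocal) (hreg : ∀ {u : A}, u ∈ Φ.S → IsSMulRegular M u)
    (Q : Ideal A) (p s : A) (hs : s ∈ Φ.S) (hsp : s * p ∈ Q) :
    Injective (rTensor M (Submodule.inclusion (le_sup_left : Q ≤ Q ⊔ Ideal.span {p}))) := by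
  classical
  set P : Ideal A := Q ⊔ Ideal.span {p} with hPdef
  set φ₀ : (Q × A) →ₗ[A] A :=
    (Submodule.subtype Q).coprod (LinearMap.toSpanSingleton A A p) with hφ₀
  have hφ₀app : ∀ (q : Q) (x : A), φ₀ (q, x) = (q : A) + x * p := by
    intro q x
    simp [hφ₀, LinearMap.coprod_apply, LinearMap.toSpanSingleton_apply, smul_eq_mul]
  have hmem : ∀ u : Q × A, φ₀ u ∈ P := by
    rintro ⟨q, x⟩
    rw [hφ₀app]
    refine P.add_mem (Submodule.mem_sup_left q.2) (Submodule.mem_sup_right ?_)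
    exact Ideal.mem_span_singleton'.2 ⟨x, rfl⟩
  set φ : (Q × A) →ₗ[A] P := LinearMap.codRestrict P φ₀ hmem with hφ
  have hφs : Surjective φ := by
    rintro ⟨y, hy⟩
    obtain ⟨q, hq, z, hz, hqz⟩ := Submodule.mem_sup.1 hy
    obtain ⟨x, hx⟩ := Ideal.mem_span_singleton'.1 hz
    refine ⟨(⟨q, hq⟩, x), Subtype.ext ?_⟩
    show φ₀ (⟨q, hq⟩, x) = y
    rw [hφ₀app, hx, hqz]
  have hexact := rTensor_exact (R := A) M (exact_subtype_ker_map φ) hφs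
  have hcomm : (φ ∘ₗ LinearMap.inl A (↥Q) A) = Submodule.inclusion (le_sup_left : Q ≤ P) := by
    apply LinearMap.ext; intro q
    apply Subtype.ext
    show φ₀ (q, 0) = (q : A)
    rw [hφ₀app, zero_mul, add_zero]
  rw [← LinearMap.ker_eq_bot, LinearMap.ker_eq_bot']
  intro z hz
  have h1 : rTensor M φ (rTensor M (LinearMap.inl A (↥Q) A) z) = 0 := by
    have haux : rTensor M (φ ∘ₗ LinearMap.inl A (↥Q) A) z = 0 := by rw [hcomm]; exact hz
    rwa [rTensor_comp, LinearMap.comp_apply] at haux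
  obtain ⟨w, hw⟩ := (hexact _).1 h1
  have hzval : rTensor M ((LinearMap.fst A (↥Q) A) ∘ₗ (ker φ).subtype) w = z := by
    calc rTensor M ((LinearMap.fst A (↥Q) A) ∘ₗ (ker φ).subtype) w
        = rTensor M (LinearMap.fst A (↥Q) A) (rTensor M (ker φ).subtype w) := by
          rw [rTensor_comp, LinearMap.comp_apply]
      _ = rTensor M (LinearMap.fst A (↥Q) A) (rTensor M (LinearMap.inl A (↥Q) A) z) := by
          rw [hw]
      _ = rTensor M ((LinearMap.fst A (↥Q) A) ∘ₗ (LinearMap.inl A (↥Q) A)) z := by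
          rw [rTensor_comp, LinearMap.comp_apply]
      _ = z := by rw [fst_comp_inl, rTensor_id, LinearMap.id_apply]
  have hzval2 : rTensor M ((LinearMap.snd A (↥Q) A) ∘ₗ (ker φ).subtype) w = 0 := by
    calc rTensor M ((LinearMap.snd A (↥Q) A) ∘ₗ (ker φ).subtype) w
        = rTensor M (LinearMap.snd A (↥Q) A) (rTensor M (ker φ).subtype w) := by
          rw [rTensor_comp, LinearMap.comp_apply]
      _ = rTensor M (LinearMap.snd A (↥Q) A) (rTensor M (LinearMap.inl A (↥Q) A) z) := by
          rw [hw]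
      _ = rTensor M ((LinearMap.snd A (↥Q) A) ∘ₗ (LinearMap.inl A (↥Q) A)) z := by
          rw [rTensor_comp, LinearMap.comp_apply]
      _ = 0 := by rw [snd_comp_inl, rTensor_zero, LinearMap.zero_apply]
  -- the component functions
  have hrel : ∀ (k : ↥(ker φ)), (((k : ↥Q × A).1 : A)) + (k : ↥Q × A).2 * p = 0 := by
    intro k
    have h0 : φ (k : ↥Q × A) = 0 := LinearMap.mem_ker.1 k.2
    have h0' : φ₀ (k : ↥Q × A) = 0 := congrArg Subtype.val h0
    have h0'' := hφ₀app (k : ↥Q × A).1 (k : ↥Q × A).2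
    rw [Prod.mk.eta] at h0''
    rw [← h0'']
    exact h0'
  obtain ⟨c0, kk, mm, hwrep⟩ := fin_rep w
  -- the ideal generated by the A-components and s
  set D : Ideal A := Ideal.span (Set.range (fun j => ((kk j : ↥Q × A).2)) ∪ {s}) with hD
  have hDfg : D.FG := Submodule.fg_span ((Set.finite_range _).union (Set.finite_singleton s))
  have hsD : s ∈ D := Ideal.subset_span (Set.mem_union_right _ rfl)
  obtain ⟨d, hdS, hdnz, hDd⟩ := exists_gen hΦ hDfg hs hsD
  have hxd : ∀ j, ∃ cc, cc * d = ((kk j : ↥Q × A).2) := by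
    intro j
    exact Ideal.mem_span_singleton'.1
      (hDd ▸ Ideal.subset_span (Set.mem_union_left _ (Set.mem_range_self j)))
  choose cf hcf using hxd
  have hDQ : D ≤ Submodule.comap (LinearMap.toSpanSingleton A A p) Q := by
    rw [hD, Ideal.span_le]
    rintro x (⟨j, rfl⟩ | rfl)
    · rw [SetLike.mem_coe, Submodule.mem_comap, LinearMap.toSpanSingleton_apply, smul_eq_mul]
      have h0 := hrel (kk j)
      have hx : ((kk j : ↥Q × A).2) * p = -(((kk j : ↥Q × A).1 : A)) := by
        linear_combination h0
      rw [hx]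
      exact Q.neg_mem (kk j : ↥Q × A).1.2
    · rw [SetLike.mem_coe, Submodule.mem_comap, LinearMap.toSpanSingleton_apply, smul_eq_mul]
      exact hsp
  have hdp : d * p ∈ Q := by
    have h := hDQ (hDd.symm ▸ Ideal.mem_span_singleton_self d)
    simpa [smul_eq_mul] using h
  -- relation among the M-components
  have hsum0 : ∑ j, ((kk j : ↥Q × A).2) • mm j = 0 := by
    have h := congrArg (TensorProduct.lid A M) hzval2
    rw [map_zero, hwrep, map_sum, map_sum] at h
    simpa [rTensor_tmul, TensorProduct.lid_tmul] using h
  have hsum1 : d • ∑ j, (cf j) • mm j = 0 := by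
    rw [Finset.smul_sum, ← hsum0]
    refine Finset.sum_congr rfl fun j _ => ?_
    rw [smul_smul, mul_comm d (cf j), hcf j]
  have hsum : ∑ j, (cf j) • mm j = 0 := by
    refine hreg hdS ?_
    show d • (∑ j, (cf j) • mm j) = d • (0 : M)
    rw [hsum1, smul_zero]
  -- conclude
  have hq0 : -(d * p) ∈ Q := Q.neg_mem hdp
  rw [← hzval, hwrep, map_sum]
  have hterm : ∀ j, rTensor M ((LinearMap.fst A (↥Q) A) ∘ₗ (ker φ).subtype) (kk j ⊗ₜ[A] mm j)
      = (cf j • (⟨-(d * p), hq0⟩ : ↥Q)) ⊗ₜ[A] mm j := by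
    intro j
    rw [rTensor_tmul]
    congr 1
    apply Subtype.ext
    show (((kk j : ↥Q × A).1 : A)) = (cf j • (⟨-(d * p), hq0⟩ : ↥Q) : ↥Q).1
    rw [Submodule.coe_smul, smul_eq_mul]
    have h0 := hrel (kk j)
    rw [← hcf j] at h0
    linear_combination h0
  calc ∑ j, rTensor M ((LinearMap.fst A (↥Q) A) ∘ₗ (ker φ).subtype) (kk j ⊗ₜ[A] mm j)
      = ∑ j, (cf j • (⟨-(d * p), hq0⟩ : ↥Q)) ⊗ₜ[A] mm j :=
        Finset.sum_congr rfl fun j _ => hterm j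
    _ = ∑ j, (⟨-(d * p), hq0⟩ : ↥Q) ⊗ₜ[A] (cf j • mm j) :=
        Finset.sum_congr rfl fun j _ => smul_tmul _ _ _
    _ = (⟨-(d * p), hq0⟩ : ↥Q) ⊗ₜ[A] (∑ j, cf j • mm j) := (TensorProduct.tmul_sum _ _ _).symm
    _ = 0 := by rw [hsum, TensorProduct.tmul_zero]

lemma chain_inj (hΦ : Φ.IsPhiLocal) (hreg : ∀ {u : A}, u ∈ Φ.S → IsSMulRegular M u)
    {s : A} (hs : s ∈ Φ.S) :
    ∀ (L : List A) (Q P : Ideal A) (hQP : Q ≤ P), P ≤ Q ⊔ Ideal.span {x | x ∈ L} →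
      (∀ x ∈ L, s * x ∈ Q) → Injective (rTensor M (Submodule.inclusion hQP))
  | [] => by
    intro Q P hQP hP hmul
    have h0 : {x : A | x ∈ ([] : List A)} = ∅ := by ext x; simp
    rw [h0, Ideal.span_empty, sup_bot_eq] at hP
    have hPQ : P = Q := le_antisymm hP hQP
    subst hPQ
    have hid : Submodule.inclusion hQP = LinearMap.id := by
      apply LinearMap.ext; intro x; apply Subtype.ext; rfl
    rw [hid, rTensor_id]
    exact fun a b h => h
  | b :: L => by
    intro Q P hQP hP hmul
    set Q' : Ideal A := Q ⊔ Ideal.span {x | x ∈ L} with hQ'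
    have h1 : Injective (rTensor M (Submodule.inclusion (le_sup_left : Q ≤ Q'))) :=
      chain_inj hΦ hreg hs L Q Q' le_sup_left (le_refl _)
        (fun x hx => hmul x (List.mem_cons_of_mem b hx))
    have h2 : Injective (rTensor M
        (Submodule.inclusion (le_sup_left : Q' ≤ Q' ⊔ Ideal.span {b}))) :=
      step_inj hΦ hreg Q' b s hs (Submodule.mem_sup_left (hmul b List.mem_cons_self))
    have hQB : Q ≤ Q' ⊔ Ideal.span {b} := le_trans le_sup_left le_sup_left
    have hbig : Injective (rTensor M (Submodule.inclusion hQB)) := by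
      have hfact : Submodule.inclusion hQB =
          (Submodule.inclusion (le_sup_left : Q' ≤ Q' ⊔ Ideal.span {b})) ∘ₗ
            (Submodule.inclusion (le_sup_left : Q ≤ Q')) := by
        apply LinearMap.ext; intro x; apply Subtype.ext; rfl
      rw [hfact, rTensor_comp, LinearMap.coe_comp]
      exact h2.comp h1
    have hP'' : P ≤ Q' ⊔ Ideal.span {b} := by
      refine hP.trans ?_
      have hcons : {x : A | x ∈ b :: L} = insert b {x : A | x ∈ L} := by
        ext x; simp [List.mem_cons]
      rw [hcons, Ideal.span_insert, hQ']
      rw [sup_comm (Ideal.span {b}) (Ideal.span {x | x ∈ L}), ← sup_assoc]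
    intro z1 z2 h
    apply hbig
    have hfact2 : Submodule.inclusion hQB =
        (Submodule.inclusion hP'') ∘ₗ (Submodule.inclusion hQP) := by
      apply LinearMap.ext; intro x; apply Subtype.ext; rfl
    rw [hfact2, rTensor_comp, LinearMap.comp_apply, LinearMap.comp_apply, h]

lemma repr_tensor (I : Ideal A) {n : ℕ} (a : Fin n → A)
    (ha : Ideal.span (Set.range a) = I) (z : (↥I) ⊗[A] M) :
    ∃ m : Fin n → M,
      z = ∑ i, (⟨a i, ha ▸ Ideal.subset_span (Set.mem_range_self i)⟩ : ↥I) ⊗ₜ[A] m i := by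
  classical
  set π : (Fin n → A) →ₗ[A] A := ∑ i, a i • LinearMap.proj i with hπ
  have hπval : ∀ c, π c = ∑ i, a i * c i := by
    intro c
    rw [hπ]
    simp [LinearMap.sum_apply, LinearMap.smul_apply, LinearMap.proj_apply, smul_eq_mul]
  have hπmem : ∀ c, π c ∈ I := by
    intro c
    rw [hπval]
    exact I.sum_mem fun i _ =>
      I.mul_mem_right _ (ha ▸ Ideal.subset_span (Set.mem_range_self i))
  set π₀ : (Fin n → A) →ₗ[A] ↥I := LinearMap.codRestrict I π hπmem with hπ₀def
  have hπ₀s : Surjective π₀ := by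
    rintro ⟨y, hy⟩
    rw [← ha] at hy
    obtain ⟨c, hc⟩ := (Submodule.mem_span_range_iff_exists_fun A).1 hy
    refine ⟨c, Subtype.ext ?_⟩
    show π c = y
    rw [hπval, ← hc]
    exact Finset.sum_congr rfl fun i _ => by rw [smul_eq_mul, mul_comm]
  obtain ⟨t, rfl⟩ := rTensor_surjective M hπ₀s z
  obtain ⟨c0, g1, g2, hG⟩ := fin_rep t
  refine ⟨fun i => ∑ g, g1 g i • g2 g, ?_⟩
  rw [hG, map_sum]
  have hval : ∀ g : Fin c0, π₀ (g1 g) =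
      ∑ i, g1 g i • (⟨a i, ha ▸ Ideal.subset_span (Set.mem_range_self i)⟩ : ↥I) := by
    intro g
    apply Subtype.ext
    have h3 : ((∑ i, g1 g i •
        (⟨a i, ha ▸ Ideal.subset_span (Set.mem_range_self i)⟩ : ↥I) : ↥I) : A)
        = ∑ i, g1 g i * a i := by
      rw [AddSubmonoidClass.coe_finset_sum]
      exact Finset.sum_congr rfl fun i _ => by rw [Submodule.coe_smul, smul_eq_mul]
    show π (g1 g) = _
    rw [h3, hπval]
    exact Finset.sum_congr rfl fun i _ => mul_comm _ _
  calc ∑ g, rTensor M π₀ (g1 g ⊗ₜ[A] g2 g)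
      = ∑ g, (∑ i, g1 g i •
          (⟨a i, ha ▸ Ideal.subset_span (Set.mem_range_self i)⟩ : ↥I)) ⊗ₜ[A] g2 g :=
        Finset.sum_congr rfl fun g _ => by rw [rTensor_tmul, hval g]
    _ = ∑ g, ∑ i, (g1 g i •
          (⟨a i, ha ▸ Ideal.subset_span (Set.mem_range_self i)⟩ : ↥I)) ⊗ₜ[A] g2 g :=
        Finset.sum_congr rfl fun g _ => TensorProduct.sum_tmul _ _ _
    _ = ∑ i, ∑ g, (⟨a i, ha ▸ Ideal.subset_span (Set.mem_range_self i)⟩ : ↥I)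
          ⊗ₜ[A] (g1 g i • g2 g) := by
        rw [Finset.sum_comm]
        exact Finset.sum_congr rfl fun i _ => Finset.sum_congr rfl fun g _ => smul_tmul _ _ _
    _ = ∑ i, (⟨a i, ha ▸ Ideal.subset_span (Set.mem_range_self i)⟩ : ↥I)
          ⊗ₜ[A] (∑ g, g1 g i • g2 g) :=
        Finset.sum_congr rfl fun i _ => (TensorProduct.tmul_sum _ _ _).symm

lemma extract (hflat : Module.Flat (Localization Φ.S) (LocalizedModule Φ.S M))
    (hinj : Injective (LocalizedModule.mkLinearMap Φ.S M))
    {n : ℕ} (a : Fin n → A) (m : Fin n → M) (hrel : ∑ i, a i • m i = 0) :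
    ∃ (σ : A) (_ : σ ∈ Φ.S) (c0 : ℕ) (k : Fin c0 → Fin n → A) (u : Fin c0 → M),
      (∀ j, ∑ i, a i * k j i = 0) ∧ (∀ i, σ • m i = ∑ j, k j i • u j) := by
  classical
  haveI := hflat
  haveI : Module.Flat A (Localization Φ.S) := IsLocalization.flat (Localization Φ.S) Φ.S
  haveI : Module.Flat A (LocalizedModule Φ.S M) :=
    Module.Flat.trans A (Localization Φ.S) (LocalizedModule Φ.S M)
  set Ms := LocalizedModule Φ.S M with hMs
  set ι : M →ₗ[A] Ms := LocalizedModule.mkLinearMap Φ.S M with hι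
  set I : Ideal A := Ideal.span (Set.range a) with hIdef
  have hIfg : I.FG := Submodule.fg_span (Set.finite_range a)
  set π : (Fin n → A) →ₗ[A] A := ∑ i, a i • LinearMap.proj i with hπ
  have hπval : ∀ c, π c = ∑ i, a i * c i := by
    intro c
    rw [hπ]
    simp [LinearMap.sum_apply, LinearMap.smul_apply, LinearMap.proj_apply, smul_eq_mul]
  have hπmem : ∀ c, π c ∈ I := by
    intro c
    rw [hπval]
    exact I.sum_mem fun i _ => I.mul_mem_right _ (Ideal.subset_span (Set.mem_range_self i))
  set π₀ : (Fin n → A) →ₗ[A] ↥I := LinearMap.codRestrict I π hπmem with hπ₀def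
  have hπ₀s : Surjective π₀ := by
    rintro ⟨y, hy⟩
    obtain ⟨c, hc⟩ := (Submodule.mem_span_range_iff_exists_fun A).1 hy
    refine ⟨c, Subtype.ext ?_⟩
    show π c = y
    rw [hπval, ← hc]
    exact Finset.sum_congr rfl fun i _ => by rw [smul_eq_mul, mul_comm]
  set e : Fin n → (Fin n → A) := fun i j => if i = j then 1 else 0 with he
  set t' : (Fin n → A) ⊗[A] Ms := ∑ i, e i ⊗ₜ[A] (ι (m i)) with ht'
  have hπe : ∀ i, π (e i) = a i := by
    intro i
    rw [hπval]
    simp [he]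
  have h0 : rTensor Ms π₀ t' = 0 := by
    have hsubπ : Submodule.subtype I ∘ₗ π₀ = π := by
      apply LinearMap.ext; intro c; rfl
    have hlid0 : ∑ i, a i • ι (m i) = 0 := by
      have hx : ∑ i, a i • ι (m i) = ι (∑ i, a i • m i) := by
        rw [map_sum]
        exact Finset.sum_congr rfl fun i _ => (map_smul ι _ _).symm
      rw [hx, hrel, map_zero]
    have hcomp : rTensor Ms (Submodule.subtype I ∘ₗ π₀) t' = 0 := by
      rw [hsubπ, ht', map_sum]
      have hterm : ∀ i, rTensor Ms π (e i ⊗ₜ[A] ι (m i)) = a i ⊗ₜ[A] ι (m i) := by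
        intro i; rw [rTensor_tmul, hπe]
      rw [Finset.sum_congr rfl fun i _ => hterm i]
      have hlid : (TensorProduct.lid A Ms) (∑ i, a i ⊗ₜ[A] ι (m i)) = 0 := by
        rw [map_sum]
        simpa [TensorProduct.lid_tmul] using hlid0
      exact (LinearEquiv.map_eq_zero_iff (TensorProduct.lid A Ms)).1 hlid
    have hsub : rTensor Ms (Submodule.subtype I) (rTensor Ms π₀ t') = 0 := by
      rwa [rTensor_comp, LinearMap.comp_apply] at hcomp
    exact (Module.Flat.iff_rTensor_injective (R := A) (M := Ms)).1 inferInstance hIfg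
      (by rw [hsub, map_zero])
  have hexact := rTensor_exact (R := A) Ms (exact_subtype_ker_map π₀) hπ₀s
  obtain ⟨w, hw⟩ := (hexact t').1 h0
  obtain ⟨c0, kk, uu, hwrep⟩ := fin_rep w
  have hcomp : ∀ i : Fin n, ι (m i) = ∑ j, ((kk j : Fin n → A) i) • uu j := by
    intro i
    have hLHS : (TensorProduct.lid A Ms) (rTensor Ms
        (LinearMap.proj i : (Fin n → A) →ₗ[A] A) (rTensor Ms (ker π₀).subtype w))
        = ∑ j, ((kk j : Fin n → A) i) • uu j := by
      rw [hwrep, map_sum, map_sum, map_sum]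
      refine Finset.sum_congr rfl fun j _ => ?_
      rw [rTensor_tmul, rTensor_tmul, TensorProduct.lid_tmul]
      rfl
    have hRHS : (TensorProduct.lid A Ms) (rTensor Ms
        (LinearMap.proj i : (Fin n → A) →ₗ[A] A) t') = ι (m i) := by
      rw [ht', map_sum, map_sum]
      have hterm : ∀ kx : Fin n, (TensorProduct.lid A Ms) (rTensor Ms
          (LinearMap.proj i : (Fin n → A) →ₗ[A] A) (e kx ⊗ₜ[A] ι (m kx)))
          = (if kx = i then (1 : A) else 0) • ι (m kx) := by
        intro kx
        rw [rTensor_tmul, TensorProduct.lid_tmul]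
        rfl
      rw [Finset.sum_congr rfl fun kx _ => hterm kx]
      simp [ite_smul]
    calc ι (m i) = (TensorProduct.lid A Ms) (rTensor Ms
          (LinearMap.proj i : (Fin n → A) →ₗ[A] A) t') := hRHS.symm
      _ = (TensorProduct.lid A Ms) (rTensor Ms
          (LinearMap.proj i : (Fin n → A) →ₗ[A] A) (rTensor Ms (ker π₀).subtype w)) := by
          rw [hw]
      _ = ∑ j, ((kk j : Fin n → A) i) • uu j := hLHS
  have hkrel : ∀ j, ∑ i, a i * (kk j : Fin n → A) i = 0 := by
    intro j
    have h0' : π₀ ((kk j : Fin n → A)) = 0 := LinearMap.mem_ker.1 (kk j).2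
    have h0'' : π ((kk j : Fin n → A)) = 0 := congrArg Subtype.val h0'
    rw [hπval] at h0''
    exact h0''
  have hsur : ∀ x : Ms, ∃ y : M × ↥Φ.S, x = LocalizedModule.mk y.1 y.2 := by
    intro x
    induction x using LocalizedModule.induction_on with
    | h mv sv => exact ⟨(mv, sv), rfl⟩
  choose rep hrep using hsur
  set σS : ↥Φ.S := Finset.univ.prod (fun j => (rep (uu j)).2) with hσSdef
  have hρ : ∀ j, ((rep (uu j)).2 : ↥Φ.S) * (Finset.univ.erase j).prod (fun j' => (rep (uu j')).2) = σS := by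
    intro j
    rw [hσSdef]
    exact Finset.mul_prod_erase Finset.univ (fun j' => (rep (uu j')).2) (Finset.mem_univ j)
  have hkey : ∀ j, (σS : A) • uu j
      = ι ((((Finset.univ.erase j).prod (fun j' => (rep (uu j')).2) : ↥Φ.S) : A) • (rep (uu j)).1) := by
    intro j
    calc (σS : A) • uu j
        = (σS : A) • LocalizedModule.mk (rep (uu j)).1 (rep (uu j)).2 := by
          rw [← hrep (uu j)]
      _ = LocalizedModule.mk ((σS : A) • (rep (uu j)).1) (rep (uu j)).2 :=
          LocalizedModule.smul'_mk _ _ _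
      _ = LocalizedModule.mk ((rep (uu j)).2 •
            ((((Finset.univ.erase j).prod (fun j' => (rep (uu j')).2) : ↥Φ.S) : A) • (rep (uu j)).1))
            (rep (uu j)).2 := by
          congr 1
          rw [← hρ j, Submonoid.coe_mul, mul_smul, Submonoid.smul_def]
      _ = LocalizedModule.mk
            ((((Finset.univ.erase j).prod (fun j' => (rep (uu j')).2) : ↥Φ.S) : A) • (rep (uu j)).1) 1 :=
          LocalizedModule.mk_cancel _ _
      _ = ι ((((Finset.univ.erase j).prod (fun j' => (rep (uu j')).2) : ↥Φ.S) : A) • (rep (uu j)).1) :=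
          (LocalizedModule.mkLinearMap_apply _ _ _).symm
  refine ⟨(σS : A), σS.2, c0, fun j => (kk j : Fin n → A),
    fun j => (((Finset.univ.erase j).prod (fun j' => (rep (uu j')).2) : ↥Φ.S) : A) • (rep (uu j)).1,
    hkrel, ?_⟩
  intro i
  apply hinj
  show ι ((σS : A) • m i) = ι _
  calc ι ((σS : A) • m i) = (σS : A) • ι (m i) := map_smul ι _ _
    _ = (σS : A) • ∑ j, ((kk j : Fin n → A) i) • uu j := by rw [hcomp i]
    _ = ∑ j, ((kk j : Fin n → A) i) • ((σS : A) • uu j) := by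
        rw [Finset.smul_sum]
        exact Finset.sum_congr rfl fun j _ => smul_comm _ _ _
    _ = ∑ j, ((kk j : Fin n → A) i) •
          ι ((((Finset.univ.erase j).prod (fun j' => (rep (uu j')).2) : ↥Φ.S) : A) • (rep (uu j)).1) :=
        Finset.sum_congr rfl fun j _ => by rw [hkey j]
    _ = ι (∑ j, ((kk j : Fin n → A) i) •
          ((((Finset.univ.erase j).prod (fun j' => (rep (uu j')).2) : ↥Φ.S) : A) • (rep (uu j)).1)) := by
        rw [map_sum]
        exact Finset.sum_congr rfl fun j _ => (map_smul ι _ _).symm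

end PhiRingProof

/-- Let `A` be a `Φ`-local `Φ`-ring and `M` an `A`-module.  Then `M` is flat over `A` if and
only if the `A^◁`-module `M ⊗_A A^◁ = S⁻¹M` is flat and the canonical map `M → M ⊗_A A^◁`
is injective. -/
theorem PhiRing.flat_iff_closure_flat_and_injective
    {A : Type*} [CommRing A] [IsLocalRing A] (Φ : PhiRing A) (hΦ : Φ.IsPhiLocal)
    (M : Type*) [AddCommGroup M] [Module A M] :
    Module.Flat A M ↔
      Module.Flat (Localization Φ.S) (LocalizedModule Φ.S M) ∧
        Function.Injective (LocalizedModule.mkLinearMap Φ.S M) := by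
  constructor
  · intro hM
    haveI := hM
    refine ⟨Module.Flat.localizedModule Φ.S, ?_⟩
    intro m1 m2 h
    rw [LocalizedModule.mkLinearMap_apply, LocalizedModule.mkLinearMap_apply,
      LocalizedModule.mk_eq] at h
    obtain ⟨u, hu⟩ := h
    rw [one_smul, one_smul, Submonoid.smul_def, Submonoid.smul_def] at hu
    exact PhiRingProof.flat_reg (PhiRingProof.nzd_of_mem_S hΦ u.2) hu
  · rintro ⟨hflat, hinj⟩
    have hreg : ∀ {u : A}, u ∈ Φ.S → IsSMulRegular M u :=
      fun hu => PhiRingProof.reg_of_S hinj hu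
    rw [Module.Flat.iff_rTensor_injective]
    intro I hIfg
    by_cases hcase : ∃ x ∈ I, x ∈ Φ.S
    · obtain ⟨x, hxI, hxS⟩ := hcase
      obtain ⟨d, hdS, hdnz, hId⟩ := PhiRingProof.exists_gen hΦ hIfg hxS hxI
      subst hId
      exact PhiRingProof.principal_inj hdnz (hreg hdS)
    · push_neg at hcase
      obtain ⟨n, a, ha⟩ := Submodule.fg_iff_exists_fin_generating_family.1 hIfg
      rw [← LinearMap.ker_eq_bot, LinearMap.ker_eq_bot']
      intro z hz
      obtain ⟨m, hm⟩ := PhiRingProof.repr_tensor I a ha z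
      have hrel : ∑ i, a i • m i = 0 := by
        have h1 : rTensor M (Submodule.subtype I) z = 0 := hz
        rw [hm, map_sum] at h1
        have h2 := congrArg (TensorProduct.lid A M) h1
        rw [map_zero, map_sum] at h2
        simpa [rTensor_tmul, TensorProduct.lid_tmul] using h2
      obtain ⟨σ, hσS, c0, k, u, hkrel, hkey⟩ := PhiRingProof.extract hflat hinj a m hrel
      have haI : ∀ i, a i ∈ I := fun i => ha ▸ Ideal.subset_span (Set.mem_range_self i)
      have hdiv : ∀ i, ∃ bb, a i = σ * bb := by
        intro i
        rcases PhiRingProof.dichotomy hΦ hσS (a i) with h | h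
        · exact absurd h (hcase (a i) (haI i))
        · exact h
      choose b hb using hdiv
      have hbJ : ∀ i, b i ∈ Ideal.span (Set.range b) :=
        fun i => Ideal.subset_span (Set.mem_range_self i)
      have hIJ : I ≤ Ideal.span (Set.range b) := by
        rw [← ha, Submodule.span_le]
        rintro x ⟨i, rfl⟩
        rw [hb i]
        exact Ideal.mul_mem_left _ σ (hbJ i)
      have hLmem : ∀ x ∈ List.ofFn b, σ * x ∈ I := by
        intro x hx
        obtain ⟨i, rfl⟩ := List.mem_ofFn.1 hx
        rw [← hb i]
        exact haI i
      have hJle : Ideal.span (Set.range b) ≤ I ⊔ Ideal.span {x | x ∈ List.ofFn b} := by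
        rw [Ideal.span_le]
        rintro x ⟨i, rfl⟩
        refine Submodule.mem_sup_right (Ideal.subset_span ?_)
        rw [Set.mem_setOf_eq, List.mem_ofFn]
        exact Set.mem_range_self i
      have hchain := PhiRingProof.chain_inj hΦ hreg hσS (List.ofFn b) I
        (Ideal.span (Set.range b)) hIJ hJle hLmem
      have hσnzd : σ ∈ nonZeroDivisors A := PhiRingProof.nzd_of_mem_S hΦ hσS
      have himg : rTensor M (Submodule.inclusion hIJ) z = 0 := by
        rw [hm, map_sum]
        have hterm : ∀ i, rTensor M (Submodule.inclusion hIJ)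
            ((⟨a i, ha ▸ Ideal.subset_span (Set.mem_range_self i)⟩ : ↥I) ⊗ₜ[A] m i)
            = (σ • (⟨b i, hbJ i⟩ : ↥(Ideal.span (Set.range b)))) ⊗ₜ[A] m i := by
          intro i
          rw [rTensor_tmul]
          congr 1
          apply Subtype.ext
          rw [Submodule.coe_smul, smul_eq_mul]
          exact hb i
        calc ∑ i, rTensor M (Submodule.inclusion hIJ)
              ((⟨a i, ha ▸ Ideal.subset_span (Set.mem_range_self i)⟩ : ↥I) ⊗ₜ[A] m i)
            = ∑ i, (σ • (⟨b i, hbJ i⟩ : ↥(Ideal.span (Set.range b)))) ⊗ₜ[A] m i :=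
              Finset.sum_congr rfl fun i _ => hterm i
          _ = ∑ i, (⟨b i, hbJ i⟩ : ↥(Ideal.span (Set.range b))) ⊗ₜ[A] (σ • m i) :=
              Finset.sum_congr rfl fun i _ => smul_tmul _ _ _
          _ = ∑ i, (⟨b i, hbJ i⟩ : ↥(Ideal.span (Set.range b))) ⊗ₜ[A] (∑ j, k j i • u j) :=
              Finset.sum_congr rfl fun i _ => by rw [hkey i]
          _ = ∑ i, ∑ j, (⟨b i, hbJ i⟩ : ↥(Ideal.span (Set.range b))) ⊗ₜ[A] (k j i • u j) :=
              Finset.sum_congr rfl fun i _ => TensorProduct.tmul_sum _ _ _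
          _ = ∑ j, (∑ i, k j i • (⟨b i, hbJ i⟩ : ↥(Ideal.span (Set.range b)))) ⊗ₜ[A] u j := by
              rw [Finset.sum_comm]
              refine Finset.sum_congr rfl fun j _ => ?_
              rw [TensorProduct.sum_tmul]
              exact Finset.sum_congr rfl fun i _ => (smul_tmul _ _ _).symm
          _ = 0 := by
              refine Finset.sum_eq_zero fun j _ => ?_
              have hzero : (∑ i, k j i • (⟨b i, hbJ i⟩ : ↥(Ideal.span (Set.range b))))
                  = (0 : ↥(Ideal.span (Set.range b))) := by
                apply Subtype.ext
                have hv : ((∑ i, k j i • (⟨b i, hbJ i⟩ : ↥(Ideal.span (Set.range b)))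
                    : ↥(Ideal.span (Set.range b))) : A) = ∑ i, k j i * b i := by
                  rw [AddSubmonoidClass.coe_finset_sum]
                  exact Finset.sum_congr rfl fun i _ => by rw [Submodule.coe_smul, smul_eq_mul]
                rw [hv]
                have hmul : σ * (∑ i, k j i * b i) = σ * 0 := by
                  rw [mul_zero, Finset.mul_sum, ← hkrel j]
                  exact Finset.sum_congr rfl fun i _ => by rw [hb i]; ring
                have hc0 := (mul_cancel_left_mem_nonZeroDivisors hσnzd).1 hmul
                simpa using hc0
              rw [hzero, TensorProduct.zero_tmul]
      exact hchain (by rw [himg, map_zero])
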